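/- Let X be a smooth affine curve over a field K of characteristic 0 whose coordinate ring contains an element Γ. Suppose ∇ = d/dΓ + b/r is a connection on A^m with A = K[Γ, 1/r], r squarefree, such that the local exponents at every root of r are all 0 (nilpotent residue matrices) and no local exponent at infinity is an integer ≥ 0. Then ker(∇ : A^m → A^m dΓ) = 0. -/

import Mathlib

open Polynomial

/-- The derivative with respect to `Γ` of a rational function. -/
noncomputable def ratDeriv {K : Type*} [Field K] (x : RatFunc K) : RatFunc K :=
  algebraMap (Polynomial K) (RatFunc K)
      (derivative x.num * x.denom - x.num * derivative x.denom) /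
    algebraMap (Polynomial K) (RatFunc K) (x.denom ^ 2)

/-- Membership in `A = K[Γ, 1/r]`, viewed inside the field of rational functions. -/
def inA {K : Type*} [Field K] (r : Polynomial K) (x : RatFunc K) : Prop :=
  ∃ (f : Polynomial K) (n : ℕ),
    x = algebraMap (Polynomial K) (RatFunc K) f / (algebraMap (Polynomial K) (RatFunc K) r) ^ n

/-- The connection `∇ = d/dΓ + b/r` acting on column vectors of rational functions. -/
noncomputable def nabla {K : Type*} [Field K] (m : ℕ) (r : Polynomial K)
    (b : Matrix (Fin m) (Fin m) (Polynomial K)) (v : Fin m → RatFunc K) : Fin m → RatFunc K :=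
  fun i => ratDeriv (v i) +
    ((Matrix.of fun i j => algebraMap (Polynomial K) (RatFunc K) (b i j) /
        algebraMap (Polynomial K) (RatFunc K) r).mulVec v) i

lemma ratDeriv_div {K : Type*} [Field K] (p q : Polynomial K) (hq : q ≠ 0) :
    ratDeriv (algebraMap (Polynomial K) (RatFunc K) p / algebraMap (Polynomial K) (RatFunc K) q) =
      algebraMap (Polynomial K) (RatFunc K) (derivative p * q - p * derivative q) /
        algebraMap (Polynomial K) (RatFunc K) (q ^ 2) := by
  set φ := algebraMap (Polynomial K) (RatFunc K) with hφ
  have hinj : Function.Injective φ := RatFunc.algebraMap_injective K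
  set x : RatFunc K := φ p / φ q with hx
  have hqφ : φ q ≠ 0 := RatFunc.algebraMap_ne_zero hq
  have hB : x.denom ≠ 0 := RatFunc.denom_ne_zero x
  have hBφ : φ x.denom ≠ 0 := RatFunc.algebraMap_ne_zero hB
  have hcross : x.num * q = p * x.denom := by
    apply hinj
    rw [map_mul, map_mul]
    have h1 : φ x.num / φ x.denom = φ p / φ q := by
      rw [hφ, RatFunc.num_div_denom]
    exact (div_eq_div_iff hBφ hqφ).mp h1
  have hcross' : derivative x.num * q + x.num * derivative q
      = derivative p * x.denom + p * derivative x.denom := by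
    have := congrArg derivative hcross
    simpa [derivative_mul] using this
  have key : (derivative x.num * x.denom - x.num * derivative x.denom) * q ^ 2
      = (derivative p * q - p * derivative q) * x.denom ^ 2 := by
    linear_combination (x.denom * q) * hcross'
      - (derivative x.denom * q + derivative q * x.denom) * hcross
  have hq2 : φ (q ^ 2) ≠ 0 := RatFunc.algebraMap_ne_zero (pow_ne_zero 2 hq)
  have hB2 : φ (x.denom ^ 2) ≠ 0 := RatFunc.algebraMap_ne_zero (pow_ne_zero 2 hB)
  rw [ratDeriv, div_eq_div_iff hB2 hq2, ← map_mul, ← map_mul]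
  exact congrArg φ (by linear_combination key)

lemma nabla_repr {K : Type*} [Field K] (r p s : Polynomial K) (hr : r ≠ 0) (n : ℕ) :
    algebraMap (Polynomial K) (RatFunc K) (derivative p * r ^ n - p * derivative (r ^ n)) /
        algebraMap (Polynomial K) (RatFunc K) ((r ^ n) ^ 2)
      + algebraMap (Polynomial K) (RatFunc K) s / algebraMap (Polynomial K) (RatFunc K) r ^ (n + 1)
    = algebraMap (Polynomial K) (RatFunc K)
        (derivative p * r + s - C ((n : ℕ) : K) * (p * derivative r)) /
        algebraMap (Polynomial K) (RatFunc K) r ^ (n + 1) := by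
  set φ := algebraMap (Polynomial K) (RatFunc K) with hφ
  have hrφ : φ r ≠ 0 := RatFunc.algebraMap_ne_zero hr
  cases n with
  | zero =>
    simp only [pow_zero, derivative_one, mul_one, mul_zero, sub_zero, one_pow, map_one,
      Nat.cast_zero, map_zero, zero_mul]
    rw [map_add, map_mul]
    field_simp
    ring
  | succ k =>
    rw [derivative_pow, Nat.succ_sub_one]
    simp only [map_sub, map_add, map_mul, map_pow, map_natCast]
    field_simp
    ring

lemma eig_zero_of_nilpotent {L : Type*} [Field L] {m : ℕ}
    {M : Matrix (Fin m) (Fin m) L} (hM : IsNilpotent M) {w : Fin m → L} {t : L}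
    (ht : t ≠ 0) (hw : M.mulVec w = t • w) : w = 0 := by
  obtain ⟨k, hk⟩ := hM
  have hiter : ∀ j : ℕ, (M ^ j).mulVec w = t ^ j • w := by
    intro j
    induction j with
    | zero => simp [Matrix.one_mulVec]
    | succ j ih =>
      rw [pow_succ', ← Matrix.mulVec_mulVec, ih, Matrix.mulVec_smul, hw, smul_smul, pow_succ,
        mul_comm]
  have h0 := hiter k
  rw [hk] at h0
  simp only [Matrix.zero_mulVec] at h0
  have htk : t ^ k ≠ 0 := pow_ne_zero k ht
  funext i
  have h1 := congrFun h0 i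
  simp only [Pi.smul_apply, Pi.zero_apply, smul_eq_mul] at h1
  exact (mul_eq_zero.mp h1.symm).resolve_left htk

lemma dvd_of_roots {K L : Type*} [Field K] [Field L] [IsAlgClosed L] [Algebra K L]
    {r f : Polynomial K} (hr : r ≠ 0) (hmonic : r.Monic) (hsep : r.Separable)
    (h : ∀ γ : L, aeval γ r = 0 → aeval γ f = 0) : r ∣ f := by
  classical
  rcases eq_or_ne f 0 with rfl | hf
  · exact dvd_zero r
  set ι := algebraMap K L
  rw [← Polynomial.map_dvd_map' ι]
  set R := r.map ι with hR
  set F := f.map ι with hF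
  have hR0 : R ≠ 0 := (Polynomial.map_ne_zero_iff (algebraMap K L).injective).mpr hr
  have hF0 : F ≠ 0 := (Polynomial.map_ne_zero_iff (algebraMap K L).injective).mpr hf
  have hRsep : R.Separable := hsep.map
  have hroots : R.roots ≤ F.roots := by
    rw [Multiset.le_iff_count]
    intro a
    rw [Polynomial.count_roots, Polynomial.count_roots]
    by_cases ha : R.IsRoot a
    · have h1 : R.rootMultiplicity a ≤ 1 :=
        Polynomial.rootMultiplicity_le_one_of_separable hRsep a
      have haF : F.IsRoot a := by
        have haR : aeval a r = 0 := by
          rwa [Polynomial.IsRoot, hR, Polynomial.eval_map, ← aeval_def] at ha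
        have := h a haR
        rwa [Polynomial.IsRoot, hF, Polynomial.eval_map, ← aeval_def]
      have h2 : 1 ≤ F.rootMultiplicity a := (Polynomial.rootMultiplicity_pos hF0).mpr haF
      omega
    · rw [Polynomial.rootMultiplicity_eq_zero ha]
      exact Nat.zero_le _
  have hRprod : R = (R.roots.map fun a => X - C a).prod :=
    (IsAlgClosed.splits R).eq_prod_roots_of_monic (hmonic.map ι)
  calc R = (R.roots.map fun a => X - C a).prod := hRprod
    _ ∣ (F.roots.map fun a => X - C a).prod :=
        Multiset.prod_dvd_prod_of_le (Multiset.map_le_map hroots)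
    _ ∣ F := Polynomial.prod_multiset_X_sub_C_dvd F

lemma key_induction {K : Type*} [Field K] [CharZero K] (m d : ℕ) (hd : 1 ≤ d)
    (r : Polynomial K) (hmonic : r.Monic) (hsf : Squarefree r) (hdeg : r.natDegree = d)
    (b : Matrix (Fin m) (Fin m) (Polynomial K)) (hb : ∀ i j, (b i j).degree ≤ (d - 1 : ℕ))
    (hnilp : ∀ γ : AlgebraicClosure K, aeval γ r = 0 →
      IsNilpotent ((aeval γ (derivative r))⁻¹ • b.map (fun q => aeval γ q)))
    (hinf : ∀ n : ℕ,
      ((n : AlgebraicClosure K) • (1 : Matrix (Fin m) (Fin m) (AlgebraicClosure K))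
        + b.map (fun q => algebraMap K (AlgebraicClosure K) (q.coeff (d - 1)))).det ≠ 0) :
    ∀ n : ℕ, ∀ f : Fin m → Polynomial K,
      (∀ i, derivative (f i) * r + ∑ j, b i j * f j = C (n : K) * (f i * derivative r)) →
      ∀ i, f i = 0 := by
  classical
  have hr0 : r ≠ 0 := hmonic.ne_zero
  have hsep : r.Separable := PerfectField.separable_iff_squarefree.mpr hsf
  intro n
  induction n with
  | zero =>
    intro f hE
    simp only [Nat.cast_zero, map_zero, zero_mul] at hE
    by_contra hne
    push_neg at hne
    obtain ⟨i0, hi0⟩ := hne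
    set N : ℕ := Finset.univ.sup fun i => (f i).natDegree with hN
    set c : Fin m → K := fun i => (f i).coeff N with hc
    have hNle : ∀ i, (f i).natDegree ≤ N :=
      fun i => Finset.le_sup (f := fun i => (f i).natDegree) (Finset.mem_univ i)
    have hcne : ∃ i, c i ≠ 0 := by
      obtain ⟨i1, -, hi1⟩ := Finset.exists_mem_eq_sup Finset.univ
        ⟨i0, Finset.mem_univ i0⟩ (fun i => (f i).natDegree)
      by_cases h1 : f i1 = 0
      · have hN0 : N = 0 := by rw [hN, hi1, h1, natDegree_zero]
        refine ⟨i0, ?_⟩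
        intro h0
        apply hi0
        have hle : (f i0).natDegree ≤ 0 := hN0 ▸ hNle i0
        have h0' : (f i0).coeff 0 = 0 := by simpa [hc, hN0] using h0
        rw [eq_C_of_natDegree_le_zero hle, h0', map_zero]
      · refine ⟨i1, ?_⟩
        have hceq : c i1 = (f i1).leadingCoeff := by
          simp only [hc]
          rw [leadingCoeff, hN, hi1]
        rw [hceq]
        exact leadingCoeff_ne_zero.mpr h1
    have hbnd : ∀ i j, (b i j).natDegree ≤ d - 1 :=
      fun i j => natDegree_le_iff_degree_le.mpr (hb i j)
    have hcoef : ∀ i, (N : K) * c i + ∑ j, (b i j).coeff (d - 1) * c j = 0 := by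
      intro i
      have h1 := congrArg (fun p => p.coeff (N + d - 1)) (hE i)
      simp only [coeff_add, finset_sum_coeff, coeff_zero] at h1
      have hsum : ∀ j, (b i j * f j).coeff (N + d - 1) = (b i j).coeff (d - 1) * c j := by
        intro j
        have hT : N + d - 1 = (d - 1) + N := by omega
        rw [hT, coeff_mul_add_eq_of_natDegree_le (hbnd i j) (hNle j)]
      have hder : (derivative (f i) * r).coeff (N + d - 1) = (N : K) * c i := by
        by_cases hN0 : N = 0
        · have : (f i).natDegree ≤ 0 := hN0 ▸ hNle i
          rw [eq_C_of_natDegree_le_zero this, derivative_C, zero_mul, coeff_zero, hN0]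
          simp
        · have hT : N + d - 1 = (N - 1) + d := by omega
          have hd1 : (derivative (f i)).natDegree ≤ N - 1 :=
            le_trans (natDegree_derivative_le (f i)) (Nat.sub_le_sub_right (hNle i) 1)
          have hrd : r.natDegree ≤ d := le_of_eq hdeg
          rw [hT, coeff_mul_add_eq_of_natDegree_le hd1 hrd]
          have hcd : r.coeff d = 1 := by rw [← hdeg]; exact hmonic.coeff_natDegree
          rw [hcd, mul_one, coeff_derivative]
          have hN1 : N - 1 + 1 = N := by omega
          rw [hN1]
          have : ((N - 1 : ℕ) : K) + 1 = (N : K) := by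
            rw [Nat.cast_sub (by omega)]; ring
          rw [this, mul_comm]
      rw [hder] at h1
      rw [Finset.sum_congr rfl (fun j _ => hsum j)] at h1
      exact h1
    set B : Matrix (Fin m) (Fin m) K := Matrix.of fun i j => (b i j).coeff (d - 1) with hB
    set M : Matrix (Fin m) (Fin m) K := (N : K) • 1 + B with hM
    have hmap : M.map (algebraMap K (AlgebraicClosure K))
        = (N : AlgebraicClosure K) • (1 : Matrix (Fin m) (Fin m) (AlgebraicClosure K))
          + b.map (fun q => algebraMap K (AlgebraicClosure K) (q.coeff (d - 1))) := by
      ext i j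
      by_cases hij : i = j <;>
        simp [hM, hB, Matrix.one_apply, hij, Matrix.map_apply, mul_comm]
    have hdet : M.det ≠ 0 := by
      intro h0
      apply hinf N
      rw [← hmap, ← RingHom.mapMatrix_apply, ← RingHom.map_det, h0, map_zero]
    have hMc : M.mulVec c = 0 := by
      funext i
      rw [hM, Matrix.add_mulVec, Matrix.smul_mulVec, Matrix.one_mulVec]
      have : B.mulVec c i = ∑ j, (b i j).coeff (d - 1) * c j := by
        simp [Matrix.mulVec, dotProduct, hB]
      simp only [Pi.add_apply, Pi.smul_apply, smul_eq_mul, Pi.zero_apply]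
      rw [this]
      exact hcoef i
    have hc0 : c = 0 := by
      have hu : IsUnit M.det := isUnit_iff_ne_zero.mpr hdet
      calc c = (1 : Matrix (Fin m) (Fin m) K).mulVec c := (Matrix.one_mulVec c).symm
        _ = (M⁻¹ * M).mulVec c := by rw [Matrix.nonsing_inv_mul M hu]
        _ = M⁻¹.mulVec (M.mulVec c) := by rw [Matrix.mulVec_mulVec]
        _ = 0 := by rw [hMc, Matrix.mulVec_zero]
    obtain ⟨i2, hi2⟩ := hcne
    exact hi2 (congrFun hc0 i2)
  | succ k ih =>
    intro f hE
    set L := AlgebraicClosure K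
    have hroots : ∀ γ : L, aeval γ r = 0 → ∀ j, aeval γ (f j) = 0 := by
      intro γ hγ
      set ρ : L := aeval γ (derivative r) with hρdef
      have hρ : ρ ≠ 0 := by
        obtain ⟨a, c', hac⟩ := hsep
        intro h0
        have := congrArg (aeval γ) hac
        simp only [map_add, map_mul, map_one, hγ, mul_zero, zero_add, ← hρdef, h0] at this
        simp at this
      set w : Fin m → L := fun j => aeval γ (f j) with hw
      set Bγ : Matrix (Fin m) (Fin m) L := b.map (fun q => aeval γ q) with hBγ
      have heq : Bγ.mulVec w = (((k + 1 : ℕ) : L) * ρ) • w := by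
        funext i
        have h1 := congrArg (aeval γ) (hE i)
        simp only [map_add, map_mul, map_sum, hγ, mul_zero, zero_add, aeval_C] at h1
        have : Bγ.mulVec w i = ∑ j, aeval γ (b i j) * aeval γ (f j) := by
          simp [Matrix.mulVec, dotProduct, hBγ, hw]
        rw [this]
        rw [h1]
        simp only [Pi.smul_apply, smul_eq_mul, hw, ← hρdef]
        push_cast
        ring
      have hnil := hnilp γ hγ
      have hM : ((ρ⁻¹ • Bγ).mulVec w) = (((k + 1 : ℕ) : L)) • w := by
        rw [Matrix.smul_mulVec, heq, smul_smul]
        congr 1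
        rw [mul_comm, mul_assoc, mul_inv_cancel₀ hρ, mul_one]
      have hw0 : w = 0 := eig_zero_of_nilpotent hnil
        (t := ((k + 1 : ℕ) : L)) (Nat.cast_ne_zero.mpr (Nat.succ_ne_zero k)) hM
      intro j
      exact congrFun hw0 j
    have hdvd : ∀ j, r ∣ f j := fun j =>
      dvd_of_roots (L := AlgebraicClosure K) hr0 hmonic hsep (fun γ hγ => hroots γ hγ j)
    set g : Fin m → Polynomial K := fun j => Classical.choose (hdvd j) with hg
    have hfg : ∀ j, f j = r * g j := fun j => Classical.choose_spec (hdvd j)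
    have hEg : ∀ i, derivative (g i) * r + ∑ j, b i j * g j
        = C ((k : ℕ) : K) * (g i * derivative r) := by
      intro i
      have h1 := hE i
      simp only [hfg, derivative_mul] at h1
      have hsum2 : ∑ j, b i j * (r * g j) = r * ∑ j, b i j * g j := by
        rw [Finset.mul_sum]
        exact Finset.sum_congr rfl fun j _ => by ring
      rw [hsum2] at h1
      have hC : (C (((k + 1 : ℕ) : K)) : Polynomial K) = C ((k : ℕ) : K) + 1 := by
        push_cast
        rw [map_add, map_one]
      rw [hC] at h1
      apply mul_left_cancel₀ hr0
      linear_combination h1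
    intro i
    rw [hfg i, ih g hEg i, mul_zero]

/-- let `∇ = d/dΓ + b/r` be a connection on `A^m`, `A = K[Γ,1/r]`, `K` of
characteristic 0, `r` monic squarefree of degree `d`, `deg b ≤ d-1`. If the residue matrix
`b(γ)/r'(γ)` at every root `γ` of `r` is nilpotent (all local exponents 0), and no local
exponent at infinity (eigenvalue of `-b_{d-1}`) is an integer `≥ 0`, then
`ker(∇ : A^m → A^m dΓ) = 0`. -/
theorem stmt11 {K : Type*} [Field K] [CharZero K] (m d : ℕ) (hd : 1 ≤ d)
    (r : Polynomial K) (hmonic : r.Monic) (hsf : Squarefree r) (hdeg : r.natDegree = d)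
    (b : Matrix (Fin m) (Fin m) (Polynomial K)) (hb : ∀ i j, (b i j).degree ≤ (d - 1 : ℕ))
    (hnilp : ∀ γ : AlgebraicClosure K, aeval γ r = 0 →
      IsNilpotent ((aeval γ (derivative r))⁻¹ • b.map (fun q => aeval γ q)))
    (hinf : ∀ n : ℕ,
      ((n : AlgebraicClosure K) • (1 : Matrix (Fin m) (Fin m) (AlgebraicClosure K))
        + b.map (fun q => algebraMap K (AlgebraicClosure K) (q.coeff (d - 1)))).det ≠ 0) :
    ∀ v : Fin m → RatFunc K, (∀ i, inA r (v i)) → nabla m r b v = 0 → v = 0 := by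
  classical
  intro v hA hnab
  set φ := algebraMap (Polynomial K) (RatFunc K) with hφ
  have hinj : Function.Injective φ := RatFunc.algebraMap_injective K
  have hr0 : r ≠ 0 := hmonic.ne_zero
  have hrφ : φ r ≠ 0 := RatFunc.algebraMap_ne_zero hr0
  choose F N hFN using hA
  set n : ℕ := Finset.univ.sup N with hn
  set f : Fin m → Polynomial K := fun i => F i * r ^ (n - N i) with hf
  have hv : ∀ i, v i = φ (f i) / φ r ^ n := by
    intro i
    rw [hFN i]
    have h1 : (n - N i) + N i = n :=
      Nat.sub_add_cancel (Finset.le_sup (f := N) (Finset.mem_univ i))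
    simp only [hf]
    rw [map_mul, map_pow, div_eq_div_iff (pow_ne_zero _ hrφ) (pow_ne_zero _ hrφ),
      mul_assoc, ← pow_add, h1]
  have hE : ∀ i, derivative (f i) * r + ∑ j, b i j * f j
      = C ((n : ℕ) : K) * (f i * derivative r) := by
    intro i
    have hei := congrFun hnab i
    simp only [nabla, Pi.zero_apply, Matrix.mulVec, dotProduct, Matrix.of_apply] at hei
    simp only [hv] at hei
    have hrw : φ (f i) / φ r ^ n = φ (f i) / φ (r ^ n) := by rw [map_pow]
    rw [hrw, ratDeriv_div (f i) (r ^ n) (pow_ne_zero n hr0)] at hei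
    have hsum : ∀ x y : Polynomial K, φ x / φ r * (φ y / φ r ^ n)
        = φ (x * y) / φ r ^ (n + 1) := by
      intro x y
      rw [map_mul, pow_succ, div_mul_div_comm, mul_comm (φ r) (φ r ^ n)]
    rw [Finset.sum_congr rfl (fun x _ => hsum (b i x) (f x))] at hei
    rw [← Finset.sum_div, ← map_sum] at hei
    rw [nabla_repr r (f i) (∑ j, b i j * f j) hr0 n] at hei
    have hnum : φ (derivative (f i) * r + ∑ j, b i j * f j
        - C ((n : ℕ) : K) * (f i * derivative r)) = 0 := by
      have := div_eq_zero_iff.mp hei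
      exact this.resolve_right (pow_ne_zero _ hrφ)
    have := hinj (hnum.trans (map_zero φ).symm)
    exact sub_eq_zero.mp this
  have hf0 : ∀ i, f i = 0 :=
    key_induction m d hd r hmonic hsf hdeg b hb hnilp hinf n f hE
  funext i
  rw [hv i, hf0 i, map_zero, zero_div]
  rfl
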